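/- Let p, K, a > 0 with pK/a < 2/π, and let b_1 ≥ a/2 − πpK/4. Then there exists C > 0 satisfying C = ((pKC + b_1)/a)·(arcsin(a/(2(pKC + b_1))) + (a/(2(pKC + b_1)))·√(1 − (a/(2(pKC + b_1)))²)), i.e., the continuum-limit synchronized solution exists. -/

import Mathlib

open Real

/-- Existence of the continuum-limit synchronized solution: for pK/a < 2/π and
b₁ ≥ a/2 − πpK/4 there exists C > 0 satisfying the self-consistency equation. -/
theorem exists_C_continuum_limit
    (p K a b1 : ℝ) (hp : 0 < p) (hK : 0 < K) (ha : 0 < a)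
    (hratio : p * K / a < 2 / Real.pi)
    (hb1 : a / 2 - Real.pi * p * K / 4 ≤ b1) :
    ∃ C > (0 : ℝ),
      C = ((p * K * C + b1) / a) *
        (Real.arcsin (a / (2 * (p * K * C + b1)))
          + (a / (2 * (p * K * C + b1))) *
            Real.sqrt (1 - (a / (2 * (p * K * C + b1))) ^ 2)) := by
  set g : ℝ → ℝ := fun η => p * K * (Real.arcsin η + η * Real.sqrt (1 - η ^ 2))
      + 2 * η * b1 - a with hg
  have hpK : 0 < p * K := mul_pos hp hK
  have hcont : ContinuousOn g (Set.Icc 0 1) := by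
    apply Continuous.continuousOn
    have h1 : Continuous fun η : ℝ => Real.arcsin η := Real.continuous_arcsin
    have h2 : Continuous fun η : ℝ => Real.sqrt (1 - η ^ 2) :=
      Real.continuous_sqrt.comp (by continuity)
    continuity
  have hg0 : g 0 = -a := by simp [hg]
  have hg1 : 0 ≤ g 1 := by
    have : g 1 = p * K * (Real.pi / 2) + 2 * b1 - a := by
      simp [hg, Real.arcsin_one]
    rw [this]; nlinarith [hb1]
  have hmem : (0 : ℝ) ∈ Set.Icc (g 0) (g 1) := by
    constructor
    · rw [hg0]; linarith
    · exact hg1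
  obtain ⟨η, hηmem, hηeq⟩ := intermediate_value_Icc (by norm_num : (0:ℝ) ≤ 1) hcont hmem
  obtain ⟨hη0, hη1⟩ := hηmem
  have hηpos : 0 < η := by
    rcases lt_or_eq_of_le hη0 with h | h
    · exact h
    · exfalso; rw [← h] at hηeq; rw [hg0] at hηeq; linarith
  -- key equation
  have key : p * K * (Real.arcsin η + η * Real.sqrt (1 - η ^ 2)) + 2 * η * b1 - a = 0 := hηeq
  have hS : 0 < Real.arcsin η + η * Real.sqrt (1 - η ^ 2) := by
    have h1 : 0 < Real.arcsin η := Real.arcsin_pos.mpr hηpos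
    have h2 : 0 ≤ η * Real.sqrt (1 - η ^ 2) :=
      mul_nonneg hηpos.le (Real.sqrt_nonneg _)
    linarith
  have hab : 0 < a - 2 * η * b1 := by nlinarith
  refine ⟨(a / (2 * η) - b1) / (p * K), ?_, ?_⟩
  · apply div_pos _ hpK
    rw [sub_pos, lt_div_iff₀ (by linarith : (0:ℝ) < 2 * η)]
    nlinarith
  · have hC : p * K * ((a / (2 * η) - b1) / (p * K)) + b1 = a / (2 * η) := by
      field_simp
      ring
    rw [hC]
    have hfrac : a / (2 * (a / (2 * η))) = η := by
      field_simp
    rw [hfrac]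
    have ha2 : a / (2 * η) / a = 1 / (2 * η) := by
      field_simp
    rw [ha2]
    field_simp
    nlinarith [key]
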